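/- arXiv:2106.06100 — 3 statements merged into one kernel-verified Lean document; each statement's English description precedes it below -/
import Mathlib

section
/- For every positive integer n and every real a > 0, the origin is an asymptotically stable equilibrium of the Liénard system L_a: for every ε > 0 there exists δ > 0 such that every solution (x, y) of L_a with x(0)² + y(0)² < δ² satisfies x(t)² + y(t)² < ε² for all t ≥ 0 and (x(t), y(t)) → (0, 0) as t → +∞. -/
set_option maxHeartbeats 2000000


open Filter

/-- `(x, y)` is a solution of the Liénard system
`ẋ = y + a (x^(2n) - 1) x`, `ẏ = -x`. -/
def IsSolLienard (n : ℕ) (a : ℝ) (x y : ℝ → ℝ) : Prop :=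
  ∀ t : ℝ, HasDerivAt x (y t + a * ((x t) ^ (2 * n) - 1) * x t) t ∧
    HasDerivAt y (-x t) t

/-- For every positive integer `n` and every real `a > 0`, the origin is an
asymptotically stable equilibrium of the Liénard system `L_a`. -/
theorem lienard_origin_asymptotically_stable (n : ℕ) (hn : 0 < n) (a : ℝ) (ha : 0 < a) :
    ∀ ε > (0 : ℝ), ∃ δ > (0 : ℝ), ∀ x y : ℝ → ℝ, IsSolLienard n a x y →
      x 0 ^ 2 + y 0 ^ 2 < δ ^ 2 →
      (∀ t : ℝ, 0 ≤ t → x t ^ 2 + y t ^ 2 < ε ^ 2) ∧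
      Tendsto (fun t : ℝ => (x t, y t)) atTop (nhds ((0 : ℝ), (0 : ℝ))) := by
  intro ε hε
  set r : ℝ := min ε 1 / 2 with hr_def
  have hr0 : 0 < r := by
    have : 0 < min ε 1 := lt_min hε one_pos
    positivity
  have hr_half : r ≤ 1 / 2 := by
    have : min ε 1 ≤ 1 := min_le_right _ _
    rw [hr_def]; linarith
  have hr_eps : r ≤ ε := by
    have h1 : min ε 1 ≤ ε := min_le_left _ _
    have : 0 < min ε 1 := lt_min hε one_pos
    rw [hr_def]; linarith
  clear_value r
  -- the cross-term coefficient
  have hden : (0 : ℝ) < 1 + a ^ 2 / 2 := by positivity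
  set β : ℝ := (3 * a / 4) / (1 + a ^ 2 / 2) with hβ_def
  have hβ0 : 0 < β := by positivity
  have hβeq : β * (1 + a ^ 2 / 2) = 3 * a / 4 := div_mul_cancel₀ _ hden.ne'
  have hβ1 : β ≤ 3 / 4 := by
    rw [hβ_def, div_le_iff₀ hden]
    nlinarith [sq_nonneg (a - 1)]
  clear_value β
  -- the decay rate
  set m : ℝ := min (3 * a / 4) (β / 2) with hm_def
  have hm0 : 0 < m := lt_min (by linarith) (by linarith)
  have hm1 : m ≤ 3 * a / 4 := min_le_left _ _
  have hm2 : m ≤ β / 2 := min_le_right _ _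
  clear_value m
  set L : ℝ := (1 - β / 2) * r ^ 2 with hL_def
  clear_value L
  refine ⟨r / 4, by positivity, ?_⟩
  intro x y hsol h0
  -- the modified Lyapunov function and its derivative
  set W : ℝ → ℝ := fun t => x t ^ 2 + y t ^ 2 - β * (x t * y t) with hW_def
  set D : ℝ → ℝ := fun t =>
    2 * x t * (y t + a * ((x t) ^ (2 * n) - 1) * x t) + 2 * y t * (-x t)
      - β * ((y t + a * ((x t) ^ (2 * n) - 1) * x t) * y t + x t * (-x t)) with hD_def
  clear_value W D
  have hWderiv : ∀ t, HasDerivAt W (D t) t := by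
    intro t
    have hx := (hsol t).1
    have hy := (hsol t).2
    have h1 : HasDerivAt (fun s => x s ^ 2) (2 * x t * (y t + a * ((x t) ^ (2 * n) - 1) * x t)) t := by
      have := hx.fun_pow 2
      simpa [mul_comm, mul_assoc, mul_left_comm] using this
    have h2 : HasDerivAt (fun s => y s ^ 2) (2 * y t * (-x t)) t := by
      have := hy.fun_pow 2
      simpa [mul_comm, mul_assoc, mul_left_comm] using this
    have h3 : HasDerivAt (fun s => x s * y s)
        ((y t + a * ((x t) ^ (2 * n) - 1) * x t) * y t + x t * (-x t)) t := hx.mul hy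
    have := (h1.fun_add h2).fun_sub (h3.const_mul β)
    simpa [hW_def, hD_def, mul_comm, mul_assoc, mul_left_comm, sub_eq_add_neg] using this
  have hWcont : Continuous W := by
    have : Differentiable ℝ W := fun t => (hWderiv t).differentiableAt
    exact this.continuous
  -- comparison with the standard norm
  have hWlower : ∀ t, (1 - β / 2) * (x t ^ 2 + y t ^ 2) ≤ W t := by
    intro t
    have h1 : β * (x t * y t) ≤ β / 2 * (x t ^ 2 + y t ^ 2) := by
      nlinarith [sq_nonneg (x t - y t), sq_nonneg (x t + y t), hβ0.le]
    simp only [hW_def]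
    nlinarith
  have hWupper : ∀ t, W t ≤ 2 * (x t ^ 2 + y t ^ 2) := by
    intro t
    simp only [hW_def]
    nlinarith [sq_nonneg (x t - y t), sq_nonneg (x t + y t), hβ0.le, hβ1]
  have hWnonneg : ∀ t, 0 ≤ W t := by
    intro t
    have h1 := hWlower t
    have h2 : (0:ℝ) ≤ (1 - β / 2) * (x t ^ 2 + y t ^ 2) :=
      mul_nonneg (by linarith) (by positivity)
    linarith
  -- initial smallness
  have hW0 : W 0 < L := by
    have h1 := hWupper 0
    have h2 : x 0 ^ 2 + y 0 ^ 2 < (r / 4) ^ 2 := h0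
    have h3 : (5 / 8 : ℝ) * r ^ 2 ≤ (1 - β / 2) * r ^ 2 := by
      nlinarith [mul_nonneg (by linarith : (0:ℝ) ≤ 3 / 4 - β) (sq_nonneg r)]
    have h4 : (r / 4) ^ 2 = r ^ 2 / 16 := by ring
    have hr2 : 0 < r ^ 2 := by positivity
    simp only [hL_def]
    linarith
  -- key pointwise derivative estimate inside the ball of radius r
  have hkey : ∀ t, x t ^ 2 + y t ^ 2 ≤ r ^ 2 → D t ≤ -(m / 2) * W t := by
    intro t hball
    set X := x t
    set Y := y t
    have hX2 : X ^ 2 ≤ 1 / 4 := by nlinarith [sq_nonneg Y, sq_nonneg r]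
    have hu0 : (0 : ℝ) ≤ X ^ (2 * n) := by
      rw [pow_mul]
      positivity
    have hu : X ^ (2 * n) ≤ 1 / 4 := by
      rw [pow_mul]
      calc (X ^ 2) ^ n ≤ X ^ 2 := by
            apply pow_le_of_le_one (sq_nonneg X) (by nlinarith) hn.ne'
        _ ≤ 1 / 4 := hX2
    set u := X ^ (2 * n) with hu_def
    have h1u : (0 : ℝ) ≤ 1 - u := by linarith
    have step1 : D t ≤ -(3 * a / 4) * X ^ 2 - β / 2 * Y ^ 2 := by
      simp only [hD_def]
      nlinarith [mul_nonneg (mul_nonneg hβ0.le h1u) (sq_nonneg (Y - a * X)),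
        mul_nonneg (mul_nonneg hβ0.le h1u) (sq_nonneg (Y + a * X)),
        mul_nonneg (mul_nonneg ha.le h1u) (sq_nonneg X),
        mul_nonneg hu0 (sq_nonneg X), mul_nonneg (mul_nonneg hβ0.le hu0) (sq_nonneg Y),
        sq_nonneg X, sq_nonneg Y, hβeq]
    have step2 : -(3 * a / 4) * X ^ 2 - β / 2 * Y ^ 2 ≤ -m * (X ^ 2 + Y ^ 2) := by
      nlinarith [sq_nonneg X, sq_nonneg Y, hm1, hm2]
    have step3 : -m * (X ^ 2 + Y ^ 2) ≤ -(m / 2) * W t := by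
      have := hWupper t
      nlinarith
    linarith
  -- invariance of the sublevel set
  have hinv : ∀ t, 0 ≤ t → W t < L := by
    by_contra hcon
    push_neg at hcon
    obtain ⟨t0, ht0, hWt0⟩ := hcon
    set B : Set ℝ := Set.Ici (0 : ℝ) ∩ W ⁻¹' Set.Ici L with hB_def
    have hBne : B.Nonempty := ⟨t0, ht0, hWt0⟩
    have hBclosed : IsClosed B := isClosed_Ici.inter (isClosed_Ici.preimage hWcont)
    have hBbdd : BddBelow B := ⟨0, fun t ht => ht.1⟩
    set T := sInf B with hT_def
    have hTB : T ∈ B := hBclosed.csInf_mem hBne hBbdd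
    have hT0 : (0 : ℝ) < T := by
      rcases eq_or_lt_of_le (Set.mem_Ici.1 hTB.1) with h | h
      · exact absurd hTB.2 (by simpa [← h] using not_le.2 hW0)
      · exact h
    have hlt : ∀ s ∈ Set.Ico (0 : ℝ) T, W s < L := by
      intro s hs
      by_contra hws
      push_neg at hws
      exact absurd hs.2 (not_lt.2 (csInf_le hBbdd ⟨hs.1, hws⟩))
    have hanti : AntitoneOn W (Set.Icc 0 T) := by
      apply antitoneOn_of_deriv_nonpos (convex_Icc 0 T) hWcont.continuousOn
      · intro s _
        exact (hWderiv s).differentiableAt.differentiableWithinAt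
      · intro s hs
        rw [interior_Icc] at hs
        rw [(hWderiv s).deriv]
        have hWs : W s < L := hlt s ⟨hs.1.le, hs.2⟩
        have hsball : x s ^ 2 + y s ^ 2 ≤ r ^ 2 := by
          have h1 := hWlower s
          have hβ2 : 0 < 1 - β / 2 := by linarith
          simp only [hL_def] at hWs
          nlinarith
        have := hkey s hsball
        have hWn := hWnonneg s
        nlinarith
    have hW_T : W T ≤ W 0 :=
      hanti (Set.left_mem_Icc.2 hT0.le) (Set.right_mem_Icc.2 hT0.le) hT0.le
    have := hTB.2
    simp only [Set.mem_preimage, Set.mem_Ici] at this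
    linarith
  have hβ2 : (0 : ℝ) < 1 - β / 2 := by linarith
  have hball : ∀ t, 0 ≤ t → x t ^ 2 + y t ^ 2 < r ^ 2 := by
    intro t ht
    have h1 := hWlower t
    have h2 := hinv t ht
    simp only [hL_def] at h2
    nlinarith
  constructor
  · intro t ht
    have h1 := hball t ht
    have : r ^ 2 ≤ ε ^ 2 := by nlinarith
    linarith
  -- exponential decay via the Gronwall trick
  · have hE : ∀ t : ℝ, HasDerivAt (fun s => Real.exp (m / 2 * s)) (Real.exp (m / 2 * t) * (m / 2)) t := by
      intro t
      have h1 : HasDerivAt (fun s : ℝ => m / 2 * s) (m / 2) t := by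
        simpa using (hasDerivAt_id t).const_mul (m / 2)
      exact h1.exp
    set g : ℝ → ℝ := fun t => W t * Real.exp (m / 2 * t) with hg_def
    have hgderiv : ∀ t, HasDerivAt g
        (D t * Real.exp (m / 2 * t) + W t * (Real.exp (m / 2 * t) * (m / 2))) t := by
      intro t
      exact (hWderiv t).mul (hE t)
    have hganti : AntitoneOn g (Set.Ici 0) := by
      apply antitoneOn_of_deriv_nonpos (convex_Ici 0)
      · exact (Continuous.mul hWcont (by continuity)).continuousOn
      · intro s _
        exact (hgderiv s).differentiableAt.differentiableWithinAt
      · intro s hs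
        rw [interior_Ici] at hs
        rw [(hgderiv s).deriv]
        have h1 := hkey s (hball s (le_of_lt hs)).le
        have h2 := hWnonneg s
        have h3 : (0 : ℝ) < Real.exp (m / 2 * s) := Real.exp_pos _
        nlinarith
    have hdecay : ∀ t, 0 ≤ t → W t ≤ W 0 * Real.exp (-(m / 2) * t) := by
      intro t ht
      have h1 : g t ≤ g 0 := hganti Set.self_mem_Ici ht ht
      simp only [hg_def, mul_zero, Real.exp_zero, mul_one] at h1
      have h3 : (0 : ℝ) < Real.exp (m / 2 * t) := Real.exp_pos _
      have h2 : W t ≤ W 0 / Real.exp (m / 2 * t) := (le_div_iff₀ h3).2 h1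
      rw [neg_mul, Real.exp_neg]
      simpa [div_eq_mul_inv] using h2
    -- conclude convergence
    have hexp : Tendsto (fun t : ℝ => 2 * W 0 * Real.exp (-(m / 2) * t)) atTop (nhds 0) := by
      have h1 : Tendsto (fun t : ℝ => -(m / 2) * t) atTop atBot := by
        apply Tendsto.const_mul_atTop_of_neg (by linarith : -(m / 2) < 0) tendsto_id
      have h2 := Real.tendsto_exp_atBot.comp h1
      simpa using h2.const_mul (2 * W 0)
    have hsum : Tendsto (fun t : ℝ => x t ^ 2 + y t ^ 2) atTop (nhds 0) := by
      apply tendsto_of_tendsto_of_tendsto_of_le_of_le' tendsto_const_nhds hexp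
      · filter_upwards with t
        positivity
      · filter_upwards [eventually_ge_atTop (0 : ℝ)] with t ht
        have h1 := hWlower t
        have h2 := hdecay t ht
        have h3 : (0 : ℝ) < Real.exp (-(m / 2) * t) := Real.exp_pos _
        nlinarith [hWnonneg 0]
    have hx : Tendsto x atTop (nhds 0) := by
      apply squeeze_zero_norm' (a := fun t => Real.sqrt (x t ^ 2 + y t ^ 2))
      · filter_upwards with t
        rw [Real.norm_eq_abs, ← Real.sqrt_sq_eq_abs]
        exact Real.sqrt_le_sqrt (by nlinarith [sq_nonneg (y t)])
      · have := (Real.continuous_sqrt.tendsto 0).comp hsum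
        simpa [Function.comp_def] using this
    have hy : Tendsto y atTop (nhds 0) := by
      apply squeeze_zero_norm' (a := fun t => Real.sqrt (x t ^ 2 + y t ^ 2))
      · filter_upwards with t
        rw [Real.norm_eq_abs, ← Real.sqrt_sq_eq_abs]
        exact Real.sqrt_le_sqrt (by nlinarith [sq_nonneg (x t)])
      · have := (Real.continuous_sqrt.tendsto 0).comp hsum
        simpa [Function.comp_def] using this
    exact hx.prodMk_nhds hy
end

section
/- For every positive integer n and every real a < 0, the origin is an unstable equilibrium of the Liénard system L_a: there exists ε > 0 such that for every δ > 0 there is a solution (x, y) of L_a with 0 < x(0)² + y(0)² < δ² and a time t ≥ 0 with x(t)² + y(t)² ≥ ε². -/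
open Set

namespace LienardAux

noncomputable section

/-- The Liénard vector field with `a = -b`. -/
def FF (n : ℕ) (b : ℝ) : ℝ × ℝ → ℝ × ℝ :=
  fun z => (z.2 + b * z.1 - b * z.1 ^ (2 * n + 1), -z.1)

def NN (z : ℝ × ℝ) : ℝ := z.1 ^ 2 + z.2 ^ 2

def WW (b : ℝ) (z : ℝ × ℝ) : ℝ := 2 * z.1 ^ 2 + 2 * b * z.1 * z.2 + (b ^ 2 + 2) * z.2 ^ 2

def ND (n : ℕ) (b : ℝ) (z : ℝ × ℝ) : ℝ := 2 * b * z.1 ^ 2 - 2 * b * z.1 ^ (2 * n + 2)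

def WD (n : ℕ) (b : ℝ) (z : ℝ × ℝ) : ℝ :=
  2 * b * z.1 ^ 2 + 2 * b * z.2 ^ 2 - 4 * b * z.1 ^ (2 * n + 2)
    - 2 * b ^ 2 * z.1 ^ (2 * n + 1) * z.2

def IsSolOn (F : ℝ × ℝ → ℝ × ℝ) (f : ℝ → ℝ × ℝ) (s : Set ℝ) : Prop :=
  ∀ t ∈ s, HasDerivWithinAt f (F (f t)) s t

lemma contDiff_FF (n : ℕ) (b : ℝ) : ContDiff ℝ 1 (FF n b) := by
  unfold FF; fun_prop

lemma continuous_NN : Continuous NN := by unfold NN; fun_prop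

lemma continuous_WW (b : ℝ) : Continuous (WW b) := by unfold WW; fun_prop

lemma hasDerivAt_fst {f : ℝ → ℝ × ℝ} {v : ℝ × ℝ} {t : ℝ} (hf : HasDerivAt f v t) :
    HasDerivAt (fun s => (f s).1) v.1 t :=
  (ContinuousLinearMap.fst ℝ ℝ ℝ).hasFDerivAt.comp_hasDerivAt t hf

lemma hasDerivAt_snd {f : ℝ → ℝ × ℝ} {v : ℝ × ℝ} {t : ℝ} (hf : HasDerivAt f v t) :
    HasDerivAt (fun s => (f s).2) v.2 t :=
  (ContinuousLinearMap.snd ℝ ℝ ℝ).hasFDerivAt.comp_hasDerivAt t hf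

lemma hasDerivAt_comp_NN {n : ℕ} {b : ℝ} {f : ℝ → ℝ × ℝ} {t : ℝ}
    (hf : HasDerivAt f (FF n b (f t)) t) :
    HasDerivAt (fun s => NN (f s)) (ND n b (f t)) t := by
  have hx := hasDerivAt_fst hf
  have hy := hasDerivAt_snd hf
  have h := (hx.pow 2).add (hy.pow 2)
  refine h.congr_deriv ?_
  unfold ND FF
  push_cast
  ring

lemma hasDerivAt_comp_WW {n : ℕ} {b : ℝ} {f : ℝ → ℝ × ℝ} {t : ℝ}
    (hf : HasDerivAt f (FF n b (f t)) t) :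
    HasDerivAt (fun s => WW b (f s)) (WD n b (f t)) t := by
  have hx := hasDerivAt_fst hf
  have hy := hasDerivAt_snd hf
  have h := (((hx.pow 2).const_mul (2:ℝ)).add ((hx.mul hy).const_mul (2*b))).add
    ((hy.pow 2).const_mul (b^2+2))
  refine HasDerivAt.congr_deriv (h.congr_of_eventuallyEq (Filter.Eventually.of_forall fun s => ?_)) ?_
  · unfold WW; simp only [Pi.add_apply, Pi.pow_apply, Pi.mul_apply]; ring
  · unfold WD FF
    push_cast
    ring

lemma ND_le {n : ℕ} (hn : 0 < n) {b : ℝ} (hb : 0 < b) (z : ℝ × ℝ) : ND n b z ≤ 2 * b := by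
  have hpow : z.1 ^ (2 * n + 2) = (z.1 ^ 2) ^ (n + 1) := by
    rw [← pow_mul]; ring_nf
  unfold ND
  rw [hpow]
  set u := z.1 ^ 2 with hu
  have hu0 : 0 ≤ u := sq_nonneg _
  rcases le_or_gt u 1 with h | h
  · have : (0:ℝ) ≤ u ^ (n + 1) := pow_nonneg hu0 _
    nlinarith
  · have : u ≤ u ^ (n + 1) := le_self_pow₀ h.le (Nat.succ_ne_zero n)
    nlinarith

lemma NN_le_WW {b : ℝ} (z : ℝ × ℝ) : NN z ≤ WW b z := by
  unfold NN WW
  nlinarith [sq_nonneg (z.1 + b * z.2), sq_nonneg z.2]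

lemma WW_le {b : ℝ} (hb : 0 < b) (z : ℝ × ℝ) : WW b z ≤ (b ^ 2 + b + 4) * NN z := by
  unfold NN WW
  nlinarith [mul_nonneg hb.le (sq_nonneg (z.1 - z.2)), sq_nonneg z.1, sq_nonneg z.2]

lemma NN_nonneg (z : ℝ × ℝ) : 0 ≤ NN z := by unfold NN; positivity

lemma WD_ge {n : ℕ} (hn : 0 < n) {b : ℝ} (hb : 0 < b) {ρ : ℝ} (hρ : ρ * (4 + b) = 1)
    {z : ℝ × ℝ} (hz : NN z ≤ ρ) : b * NN z ≤ WD n b z := by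
  have hb4 : (0:ℝ) < 4 + b := by linarith
  have hρ0 : 0 < ρ := by nlinarith
  have hρ1 : ρ ≤ 1 := by nlinarith
  have hN0 : 0 ≤ NN z := NN_nonneg z
  have hx2 : z.1 ^ 2 ≤ ρ := by
    have := sq_nonneg z.2; unfold NN at hz; linarith
  have hk0 : (0:ℝ) ≤ z.1 ^ (2 * n) := by
    rw [pow_mul]; positivity
  have hk : z.1 ^ (2 * n) ≤ z.1 ^ 2 := by
    have h1 : z.1 ^ 2 ≤ 1 := hx2.trans hρ1
    calc z.1 ^ (2 * n) = (z.1 ^ 2) ^ n := by rw [pow_mul]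
    _ ≤ (z.1 ^ 2) ^ 1 := pow_le_pow_of_le_one (sq_nonneg _) h1 hn
    _ = z.1 ^ 2 := pow_one _
  set k := z.1 ^ (2 * n) with hkdef
  have hkρ : k ≤ ρ := hk.trans hx2
  have e1 : z.1 ^ (2 * n + 2) = k * z.1 ^ 2 := by rw [hkdef, ← pow_add]
  have e2 : z.1 ^ (2 * n + 1) * z.2 = k * (z.1 * z.2) := by
    rw [hkdef]; ring
  have h2 : 2 * (k * (z.1 * z.2)) ≤ k * (z.1 ^ 2 + z.2 ^ 2) := by
    nlinarith [mul_nonneg hk0 (sq_nonneg (z.1 - z.2))]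
  have c1 : k * z.1 ^ 2 ≤ ρ * NN z := by
    have hA : k * z.1 ^ 2 ≤ ρ * z.1 ^ 2 := mul_le_mul_of_nonneg_right hkρ (sq_nonneg _)
    have hB : ρ * z.1 ^ 2 ≤ ρ * NN z := by
      unfold NN; nlinarith [sq_nonneg z.2]
    linarith
  have c2 : 2 * (k * (z.1 * z.2)) ≤ ρ * NN z := by
    have hB : k * (z.1 ^ 2 + z.2 ^ 2) ≤ ρ * (z.1 ^ 2 + z.2 ^ 2) :=
      mul_le_mul_of_nonneg_right hkρ hN0
    show 2 * (k * (z.1 * z.2)) ≤ ρ * (z.1 ^ 2 + z.2 ^ 2)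
    linarith [h2]
  have hsplit' : 4 * b * (ρ * NN z) + b ^ 2 * (ρ * NN z) = b * NN z := by
    linear_combination (b * NN z) * hρ
  have sc1 : 4 * b * (k * z.1 ^ 2) ≤ 4 * b * (ρ * NN z) :=
    mul_le_mul_of_nonneg_left c1 (by positivity)
  have sc2 : b ^ 2 * (2 * (k * (z.1 * z.2))) ≤ b ^ 2 * (ρ * NN z) :=
    mul_le_mul_of_nonneg_left c2 (sq_nonneg b)
  have key : WD n b z
      = 2 * b * NN z - 4 * b * (k * z.1 ^ 2) - b ^ 2 * (2 * (k * (z.1 * z.2))) := by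
    unfold WD NN
    rw [hkdef]
    ring
  rw [key]
  linarith


lemma hasDerivWithinAt_singleton (f : ℝ → ℝ × ℝ) (v : ℝ × ℝ) (t₀ : ℝ) :
    HasDerivWithinAt f v {t₀} t₀ := by
  rw [hasDerivWithinAt_iff_isLittleO, nhdsWithin_singleton, Asymptotics.isLittleO_pure]
  simp

lemma isSolOn_singleton (F : ℝ × ℝ → ℝ × ℝ) (z₀ : ℝ × ℝ) (t₀ : ℝ) :
    IsSolOn F (fun _ => z₀) {t₀} := by
  intro t ht
  rcases ht with rfl
  exact hasDerivWithinAt_singleton _ _ _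

lemma hasDerivWithinAt_of_nmem_closure {f : ℝ → ℝ × ℝ} {v : ℝ × ℝ} {s : Set ℝ} {t : ℝ}
    (h : t ∉ closure s) : HasDerivWithinAt f v s t := by
  rw [hasDerivWithinAt_iff_isLittleO]
  rw [mem_closure_iff_nhdsWithin_neBot] at h
  rw [Filter.not_neBot.mp h]
  exact Asymptotics.isLittleO_bot (f := fun x' => f x' - f t - (x' - t) • v)
    (g := fun x' => x' - t)

lemma glue_sol {F : ℝ × ℝ → ℝ × ℝ} {c d e : ℝ} (hcd : c ≤ d) (hde : d ≤ e)
    {f g : ℝ → ℝ × ℝ} (hf : IsSolOn F f (Icc c d)) (hg : IsSolOn F g (Icc d e))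
    (hfg : f d = g d) :
    ∃ h : ℝ → ℝ × ℝ, EqOn h f (Icc c d) ∧ EqOn h g (Icc d e) ∧ IsSolOn F h (Icc c e) := by
  set h : ℝ → ℝ × ℝ := fun t => if t ≤ d then f t else g t with hh
  have heqf : EqOn h f (Icc c d) := by
    intro t ht; simp only [hh, if_pos ht.2]
  have heqg : EqOn h g (Icc d e) := by
    intro t ht
    rcases eq_or_lt_of_le ht.1 with h1 | h1
    · simp only [hh, ← h1, if_pos le_rfl, hfg]
    · simp only [hh, if_neg (not_le.mpr h1)]
  refine ⟨h, heqf, heqg, ?_⟩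
  intro t ht
  rw [← Icc_union_Icc_eq_Icc hcd hde]
  rcases le_or_gt t d with htd | htd
  · have htm : t ∈ Icc c d := ⟨ht.1, htd⟩
    have piece1 : HasDerivWithinAt h (F (h t)) (Icc c d) t := by
      have := hf t htm
      rw [heqf htm]
      exact this.congr (fun y hy => heqf hy) (heqf htm)
    have piece2 : HasDerivWithinAt h (F (h t)) (Icc d e) t := by
      rcases eq_or_lt_of_le htd with h1 | h1
      · subst h1
        have htm2 : t ∈ Icc t e := ⟨le_rfl, hde⟩
        have := hg t ⟨le_rfl, hde⟩
        rw [heqg ⟨le_rfl, hde⟩]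
        exact this.congr (fun y hy => heqg hy) (heqg ⟨le_rfl, hde⟩)
      · apply hasDerivWithinAt_of_nmem_closure
        rw [closure_Icc]
        exact fun hc => absurd hc.1 (not_le.mpr h1)
    exact piece1.union piece2
  · have htm : t ∈ Icc d e := ⟨htd.le, ht.2⟩
    have piece1 : HasDerivWithinAt h (F (h t)) (Icc c d) t := by
      apply hasDerivWithinAt_of_nmem_closure
      rw [closure_Icc]
      exact fun hc => absurd hc.2 (not_le.mpr htd)
    have piece2 : HasDerivWithinAt h (F (h t)) (Icc d e) t := by
      have := hg t htm
      rw [heqg htm]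
      exact this.congr (fun y hy => heqg hy) (heqg htm)
    exact piece1.union piece2

lemma lipschitz_ball (F : ℝ × ℝ → ℝ × ℝ) (hF : ContDiff ℝ 1 F) (r : ℝ) :
    ∃ K : NNReal, LipschitzOnWith K F (Metric.closedBall (0 : ℝ × ℝ) r) := by
  obtain ⟨L, hL⟩ := (isCompact_closedBall (0 : ℝ × ℝ) r).exists_bound_of_continuousOn
    ((hF.continuous_fderiv one_ne_zero).continuousOn)
  refine ⟨(max L 0).toNNReal, ?_⟩
  apply Convex.lipschitzOnWith_of_nnnorm_fderiv_le (fun x _ => hF.differentiable one_ne_zero x)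
    (fun x hx => ?_) (convex_closedBall _ _)
  rw [← NNReal.coe_le_coe, coe_nnnorm, Real.coe_toNNReal _ (le_max_right _ _)]
  exact (hL x hx).trans (le_max_left _ _)

lemma local_sol (F : ℝ × ℝ → ℝ × ℝ) (hF : ContDiff ℝ 1 F) (R : ℝ) (hR : 0 ≤ R) :
    ∃ τ > (0:ℝ), ∀ z₀ : ℝ × ℝ, ‖z₀‖ ≤ R → ∀ t₀ : ℝ,
      ∃ f : ℝ → ℝ × ℝ, f t₀ = z₀ ∧ IsSolOn F f (Icc (t₀ - τ) (t₀ + τ)) := by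
  obtain ⟨C, hC⟩ := (isCompact_closedBall (0 : ℝ × ℝ) (R + 1)).exists_bound_of_continuousOn
    hF.continuous.continuousOn
  obtain ⟨K, hK⟩ := lipschitz_ball F hF (R + 1)
  set C' := max C 1 with hC'
  have hC'pos : (0:ℝ) < C' := lt_of_lt_of_le one_pos (le_max_right _ _)
  refine ⟨1 / C', by positivity, ?_⟩
  intro z₀ hz₀ t₀
  have hball : Metric.closedBall z₀ 1 ⊆ Metric.closedBall (0 : ℝ × ℝ) (R + 1) := by
    intro w hw
    rw [Metric.mem_closedBall] at *
    calc dist w 0 ≤ dist w z₀ + dist z₀ 0 := dist_triangle _ _ _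
    _ ≤ 1 + R := add_le_add hw (by rwa [dist_zero_right])
    _ = R + 1 := by ring
  have hτ0 : (0:ℝ) < 1 / C' := one_div_pos.mpr hC'pos
  have hPL : IsPicardLindelof (fun _ : ℝ => F) (tmin := t₀ - 1 / C') (tmax := t₀ + 1 / C')
      ⟨t₀, by constructor <;> linarith⟩ z₀ 1 0 C'.toNNReal K := by
    constructor
    · exact fun t _ => hK.mono (by simpa using hball)
    · exact fun x _ => continuousOn_const
    · exact fun t _ x hx => (hC x (hball (by simpa using hx))).trans
        ((le_max_left _ _).trans_eq (Real.coe_toNNReal _ hC'pos.le).symm)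
    · have : max (t₀ + 1 / C' - t₀) (t₀ - (t₀ - 1 / C')) = 1 / C' := by
        rw [add_sub_cancel_left, sub_sub_cancel, max_self]
      simp only [Real.coe_toNNReal _ hC'pos.le, NNReal.coe_one, NNReal.coe_zero, sub_zero]
      rw [this, mul_one_div, div_self (ne_of_gt hC'pos)]
  obtain ⟨f, hf0, hf⟩ := hPL.exists_eq_forall_mem_Icc_hasDerivWithinAt₀
  exact ⟨f, hf0, fun t ht => hf t ht⟩


variable {n : ℕ} {b : ℝ}

/-- A priori bound for solutions starting at a point with small Lyapunov value. -/
lemma apriori (hn : 0 < n) (hb : 0 < b) {ρ : ℝ} (hρ : ρ * (4 + b) = 1)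
    {c d : ℝ} (hc : c ≤ 0) (hd : 0 ≤ d) {f : ℝ → ℝ × ℝ}
    (hsol : IsSolOn (FF n b) f (Icc c d)) (h0 : WW b (f 0) < ρ) :
    ∀ t ∈ Icc c d, NN (f t) ≤ max ρ (NN (f 0) + 2 * b * d) := by
  have hmem0 : (0:ℝ) ∈ Icc c d := ⟨hc, hd⟩
  have hcont : ContinuousOn f (Icc c d) := fun t ht => (hsol t ht).continuousWithinAt
  have hcontN : ContinuousOn (fun t => NN (f t)) (Icc c d) :=
    continuous_NN.comp_continuousOn hcont
  have hcontW : ContinuousOn (fun t => WW b (f t)) (Icc c d) :=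
    (continuous_WW b).comp_continuousOn hcont
  have hderiv : ∀ s ∈ Ioo c d, HasDerivAt f (FF n b (f s)) s := fun s hs =>
    (hsol s (Ioo_subset_Icc_self hs)).hasDerivAt (Icc_mem_nhds hs.1 hs.2)
  intro t ht
  rcases le_or_gt 0 t with ht0 | ht0
  · -- forward: energy grows at most linearly
    have hanti : AntitoneOn (fun s => NN (f s) - s * (2 * b)) (Icc 0 d) := by
      apply antitoneOn_of_hasDerivWithinAt_nonpos (convex_Icc 0 d)
        (f' := fun s => ND n b (f s) - 2 * b)
      · exact (hcontN.mono (Icc_subset_Icc hc le_rfl)).sub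
          ((continuous_id.mul continuous_const).continuousOn)
      · intro s hs
        rw [interior_Icc] at hs
        have hs' : s ∈ Ioo c d := ⟨lt_of_le_of_lt hc hs.1, hs.2⟩
        exact ((hasDerivAt_comp_NN (hderiv s hs')).sub
          (hasDerivAt_mul_const (2 * b))).hasDerivWithinAt
      · intro s hs
        rw [interior_Icc] at hs
        have hs' : s ∈ Ioo c d := ⟨lt_of_le_of_lt hc hs.1, hs.2⟩
        have := ND_le hn hb (f s)
        linarith
    have h1 : NN (f t) - t * (2 * b) ≤ NN (f 0) - 0 * (2 * b) :=
      hanti ⟨le_rfl, hd⟩ ⟨ht0, ht.2⟩ ht0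
    have h2 : NN (f t) ≤ NN (f 0) + 2 * b * d := by
      have htd : t ≤ d := ht.2
      nlinarith
    exact h2.trans (le_max_right _ _)
  · -- backward: trapped by the Lyapunov function
    refine le_trans ?_ (le_max_left _ _)
    by_contra hcon
    push_neg at hcon
    set S := {s | s ∈ Icc c (0:ℝ) ∧ ρ ≤ NN (f s)} with hS
    have hSsub : S ⊆ Icc c 0 := fun s hs => hs.1
    have hSne : S.Nonempty := ⟨t, ⟨ht.1, ht0.le⟩, hcon.le⟩
    have hSclosed : IsClosed S := by
      have : S = Icc c 0 ∩ (fun s => NN (f s)) ⁻¹' (Ici ρ) := by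
        ext s; simp [hS, Set.mem_setOf_eq]
      rw [this]
      exact (hcontN.mono (Icc_subset_Icc le_rfl hd)).preimage_isClosed_of_isClosed
        isClosed_Icc isClosed_Ici
    have hScomp : IsCompact S := isCompact_Icc.of_isClosed_subset hSclosed hSsub
    set t1 := sSup S with ht1
    have ht1S : t1 ∈ S := hScomp.sSup_mem hSne
    have ht1c : c ≤ t1 := ht1S.1.1
    have ht1le0 : t1 ≤ 0 := ht1S.1.2
    have ht1N : ρ ≤ NN (f t1) := ht1S.2
    have hN0lt : NN (f 0) < ρ := lt_of_le_of_lt (NN_le_WW (f 0)) h0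
    have ht1lt0 : t1 < 0 := by
      rcases lt_or_eq_of_le ht1le0 with h | h
      · exact h
      · exfalso; rw [h] at ht1N; linarith
    have hlt : ∀ s ∈ Ioc t1 0, NN (f s) < ρ := by
      intro s hs
      by_contra hcon2
      push_neg at hcon2
      have hsS : s ∈ S := ⟨⟨le_trans ht1c hs.1.le, hs.2⟩, hcon2⟩
      exact absurd (le_csSup hScomp.bddAbove hsS) (not_le.mpr hs.1)
    have hmono : MonotoneOn (fun s => WW b (f s)) (Icc t1 0) := by
      apply monotoneOn_of_hasDerivWithinAt_nonneg (convex_Icc t1 0)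
        (f' := fun s => WD n b (f s))
      · exact hcontW.mono (Icc_subset_Icc ht1c hd)
      · intro s hs
        rw [interior_Icc] at hs
        have hs' : s ∈ Ioo c d := ⟨lt_of_le_of_lt ht1c hs.1, lt_of_lt_of_le hs.2 hd⟩
        exact (hasDerivAt_comp_WW (hderiv s hs')).hasDerivWithinAt
      · intro s hs
        rw [interior_Icc] at hs
        have hsN : NN (f s) ≤ ρ := (hlt s ⟨hs.1, hs.2.le⟩).le
        have h1 := WD_ge hn hb hρ hsN
        nlinarith [NN_nonneg (f s)]
    have hfin : WW b (f t1) ≤ WW b (f 0) :=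
      hmono ⟨le_rfl, ht1le0⟩ ⟨ht1le0, le_rfl⟩ ht1le0
    have := NN_le_WW (b := b) (f t1)
    linarith

lemma norm_le_sqrt {z : ℝ × ℝ} {r : ℝ} (h : NN z ≤ r) : ‖z‖ ≤ Real.sqrt r := by
  have h2 : ‖z‖ ^ 2 ≤ r := by
    have hz1 : z.1 ^ 2 ≤ r := by
      unfold NN at h; nlinarith [sq_nonneg z.2]
    have hz2 : z.2 ^ 2 ≤ r := by
      unfold NN at h; nlinarith [sq_nonneg z.1]
    rw [Prod.norm_def]
    rcases max_cases ‖z.1‖ ‖z.2‖ with ⟨heq, _⟩ | ⟨heq, _⟩ <;> rw [heq] <;>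
      rw [Real.norm_eq_abs, sq_abs] <;> assumption
  calc ‖z‖ = Real.sqrt (‖z‖ ^ 2) := (Real.sqrt_sq (norm_nonneg z)).symm
  _ ≤ Real.sqrt r := Real.sqrt_le_sqrt h2

lemma exists_sol_Icc (hn : 0 < n) (hb : 0 < b) {ρ : ℝ} (hρ : ρ * (4 + b) = 1)
    (z₀ : ℝ × ℝ) (hz : WW b z₀ < ρ) (m : ℕ) :
    ∃ f : ℝ → ℝ × ℝ, f 0 = z₀ ∧ IsSolOn (FF n b) f (Icc (-(m:ℝ)) m) := by
  set R := Real.sqrt (max ρ (NN z₀ + 2 * b * m)) with hRdef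
  obtain ⟨τ, hτ, hloc⟩ := local_sol (FF n b) (contDiff_FF n b) R (Real.sqrt_nonneg _)
  have hbound : ∀ e : ℝ, 0 ≤ e → e ≤ m → ∀ f : ℝ → ℝ × ℝ, f 0 = z₀ →
      IsSolOn (FF n b) f (Icc (-e) e) → ∀ t ∈ Icc (-e) e, ‖f t‖ ≤ R := by
    intro e he hem f hf0 hsol t ht
    have h1 := apriori hn hb hρ (neg_nonpos.mpr he) he hsol (by rw [hf0]; exact hz) t ht
    apply norm_le_sqrt
    apply h1.trans
    apply max_le_max le_rfl
    rw [hf0]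
    exact add_le_add_right (by nlinarith) _
  have key : ∀ j : ℕ, ∃ f : ℝ → ℝ × ℝ, f 0 = z₀ ∧
      IsSolOn (FF n b) f (Icc (-(min ((j:ℝ) * τ) m)) (min ((j:ℝ) * τ) m)) := by
    intro j
    induction j with
    | zero =>
      refine ⟨fun _ => z₀, rfl, ?_⟩
      rw [Nat.cast_zero, zero_mul, min_eq_left (Nat.cast_nonneg m), neg_zero, Icc_self]
      exact isSolOn_singleton _ _ _
    | succ j ih =>
      obtain ⟨f, hf0, hfsol⟩ := ih
      push_cast
      set cj := min ((j:ℝ) * τ) (m:ℝ) with hcj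
      set c' := min (((j:ℝ) + 1) * τ) (m:ℝ) with hc'
      have hcj0 : 0 ≤ cj := le_min (by positivity) (Nat.cast_nonneg m)
      have hcjm : cj ≤ m := min_le_right _ _
      have hc'm : c' ≤ m := min_le_right _ _
      have hcc' : cj ≤ c' := min_le_min (by nlinarith) le_rfl
      have hc'τ : c' ≤ cj + τ := by
        rcases le_total ((j:ℝ) * τ) (m:ℝ) with h | h
        · rw [hcj, min_eq_left h]
          calc c' ≤ ((j:ℝ) + 1) * τ := min_le_left _ _
          _ = (j:ℝ) * τ + τ := by ring
        · rw [hcj, min_eq_right h]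
          linarith
      have hbd := hbound cj hcj0 hcjm f hf0 hfsol
      obtain ⟨g, hg0, hgsol⟩ := hloc (f cj) (hbd cj ⟨by linarith, le_rfl⟩) cj
      have hgsol' : IsSolOn (FF n b) g (Icc cj c') := fun t ht =>
        (hgsol t ⟨by linarith [ht.1, hτ], by linarith [ht.2]⟩).mono
          (Icc_subset_Icc (by linarith) (by linarith))
      obtain ⟨h1, h1f, h1g, h1sol⟩ :=
        glue_sol (by linarith : -cj ≤ cj) hcc' hfsol hgsol' hg0.symm
      have h10 : h1 0 = z₀ := by
        rw [h1f ⟨by linarith, hcj0⟩, hf0]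
      obtain ⟨g2, hg20, hg2sol⟩ := hloc (f (-cj)) (hbd (-cj) ⟨le_rfl, by linarith⟩) (-cj)
      have hg2sol' : IsSolOn (FF n b) g2 (Icc (-c') (-cj)) := fun t ht =>
        (hg2sol t ⟨by linarith [ht.1], by linarith [ht.2, hτ]⟩).mono
          (Icc_subset_Icc (by linarith) (by linarith))
      obtain ⟨h2, h2g2, h2h1, h2sol⟩ :=
        glue_sol (by linarith : -c' ≤ -cj) (by linarith : -cj ≤ c') hg2sol' h1sol
          (by rw [hg20]; exact (h1f ⟨le_rfl, by linarith⟩).symm)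
      refine ⟨h2, ?_, h2sol⟩
      rw [h2h1 ⟨by linarith, by linarith⟩]
      exact h10
  obtain ⟨j, hj⟩ := exists_nat_ge ((m:ℝ) / τ)
  have hjm : (m:ℝ) ≤ (j:ℝ) * τ := by
    rw [div_le_iff₀ hτ] at hj; linarith
  obtain ⟨f, hf0, hfsol⟩ := key j
  rw [min_eq_right hjm] at hfsol
  exact ⟨f, hf0, hfsol⟩

lemma global_sol (hn : 0 < n) (hb : 0 < b) {ρ : ℝ} (hρ : ρ * (4 + b) = 1)
    (z₀ : ℝ × ℝ) (hz : WW b z₀ < ρ) :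
    ∃ f : ℝ → ℝ × ℝ, f 0 = z₀ ∧ ∀ t, HasDerivAt f (FF n b (f t)) t := by
  have hex := fun m => exists_sol_Icc hn hb hρ z₀ hz m
  choose fs hfs0 hfssol using hex
  have hsolsub : ∀ m m' : ℕ, m ≤ m' → IsSolOn (FF n b) (fs m') (Icc (-(m:ℝ)) m) := by
    intro m m' hmm' t ht
    have hsub : Icc (-(m:ℝ)) m ⊆ Icc (-(m':ℝ)) m' :=
      Icc_subset_Icc (neg_le_neg (Nat.cast_le.mpr hmm')) (Nat.cast_le.mpr hmm')
    exact (hfssol m' t (hsub ht)).mono hsub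
  have coh : ∀ m m' : ℕ, 0 < m → m ≤ m' → EqOn (fs m) (fs m') (Icc (-(m:ℝ)) m) := by
    intro m m' hm hmm'
    set R := Real.sqrt (max ρ (NN z₀ + 2 * b * m)) with hR
    obtain ⟨K, hK⟩ := lipschitz_ball (FF n b) (contDiff_FF n b) R
    have hm0 : (0:ℝ) < m := by exact_mod_cast hm
    have hball : ∀ g : ℝ → ℝ × ℝ, g 0 = z₀ → IsSolOn (FF n b) g (Icc (-(m:ℝ)) m) →
        ∀ t ∈ Icc (-(m:ℝ)) m, g t ∈ Metric.closedBall (0 : ℝ × ℝ) R := by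
      intro g hg0 hgsol t ht
      rw [Metric.mem_closedBall, dist_zero_right]
      apply norm_le_sqrt
      have h1 := apriori hn hb hρ (by linarith : -(m:ℝ) ≤ 0) (by positivity) hgsol
        (by rw [hg0]; exact hz) t ht
      rw [hg0] at h1
      exact h1
    have hder : ∀ g : ℝ → ℝ × ℝ, IsSolOn (FF n b) g (Icc (-(m:ℝ)) m) →
        ∀ t ∈ Ioo (-(m:ℝ)) m, HasDerivAt g (FF n b (g t)) t := fun g hg t ht =>
      (hg t (Ioo_subset_Icc_self ht)).hasDerivAt (Icc_mem_nhds ht.1 ht.2)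
    have hcont : ∀ g : ℝ → ℝ × ℝ, IsSolOn (FF n b) g (Icc (-(m:ℝ)) m) →
        ContinuousOn g (Icc (-(m:ℝ)) m) := fun g hg t ht => (hg t ht).continuousWithinAt
    exact ODE_solution_unique_of_mem_Icc (fun _ _ => hK) ⟨by linarith, hm0⟩
      (hcont _ (hfssol m)) (hder _ (hfssol m)) (fun t ht => hball _ (hfs0 m) (hfssol m) t
        (Ioo_subset_Icc_self ht))
      (hcont _ (hsolsub m m' hmm')) (hder _ (hsolsub m m' hmm'))
      (fun t ht => hball _ (hfs0 m') (hsolsub m m' hmm') t (Ioo_subset_Icc_self ht))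
      (by rw [hfs0, hfs0])
  refine ⟨fun t => fs (⌊|t|⌋₊ + 1) t, ?_, ?_⟩
  · show fs (⌊|(0:ℝ)|⌋₊ + 1) 0 = z₀
    rw [abs_zero, Nat.floor_zero]
    exact hfs0 1
  · intro t
    set m := ⌊|t|⌋₊ + 1 with hm
    have htm : |t| < (m:ℝ) := by rw [hm]; push_cast; exact Nat.lt_floor_add_one _
    have habs := abs_lt.mp htm
    have hEq : EqOn (fun s => fs (⌊|s|⌋₊ + 1) s) (fs m) (Ioo (-(m:ℝ)) m) := by
      intro s hs
      have hsm : |s| < (m:ℝ) := abs_lt.mpr ⟨hs.1, hs.2⟩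
      have hle : ⌊|s|⌋₊ + 1 ≤ m := by
        have h1 : ⌊|s|⌋₊ < m := (Nat.floor_lt (abs_nonneg s)).mpr (by exact_mod_cast hsm)
        omega
      have h2 : |s| ≤ ((⌊|s|⌋₊ + 1 : ℕ):ℝ) := by
        push_cast; exact (Nat.lt_floor_add_one _).le
      have hmem := abs_le.mp h2
      exact coh (⌊|s|⌋₊ + 1) m (Nat.succ_pos _) hle ⟨hmem.1, hmem.2⟩
    have hd : HasDerivAt (fs m) (FF n b (fs m t)) t :=
      (hfssol m t ⟨habs.1.le, habs.2.le⟩).hasDerivAt (Icc_mem_nhds habs.1 habs.2)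
    have hev : (fun s => fs (⌊|s|⌋₊ + 1) s) =ᶠ[nhds t] fs m :=
      Filter.eventuallyEq_of_mem (isOpen_Ioo.mem_nhds ⟨habs.1, habs.2⟩) hEq
    exact hd.congr_of_eventuallyEq hev

lemma escape (hn : 0 < n) (hb : 0 < b) {ρ : ℝ} (hρ : ρ * (4 + b) = 1) {f : ℝ → ℝ × ℝ}
    (hf : ∀ t, HasDerivAt f (FF n b (f t)) t) (h0 : 0 < NN (f 0)) :
    ∃ t, 0 ≤ t ∧ ρ ≤ NN (f t) := by
  by_contra hcon
  push_neg at hcon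
  set M := b ^ 2 + b + 4 with hM
  have hMpos : 0 < M := by positivity
  set W0 := WW b (f 0) with hW0def
  have hW0 : 0 < W0 := lt_of_lt_of_le h0 (NN_le_WW _)
  have hρ0 : 0 < ρ := by nlinarith
  set T := M ^ 2 * ρ / (b * W0) with hT
  have hTpos : 0 < T := by positivity
  have hcontf : Continuous f := by
    rw [continuous_iff_continuousAt]; exact fun t => (hf t).continuousAt
  have hcI : Convex ℝ (Icc (0:ℝ) T) := convex_Icc _ _
  have hWcont : ContinuousOn (fun s => WW b (f s)) (Icc 0 T) :=
    ((continuous_WW b).comp hcontf).continuousOn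
  have hmW : MonotoneOn (fun s => WW b (f s)) (Icc 0 T) := by
    apply monotoneOn_of_hasDerivWithinAt_nonneg hcI hWcont (f' := fun s => WD n b (f s))
    · intro s _; exact (hasDerivAt_comp_WW (hf s)).hasDerivWithinAt
    · intro s hs
      rw [interior_Icc] at hs
      have h1 := WD_ge hn hb hρ (hcon s hs.1.le).le
      nlinarith [NN_nonneg (f s)]
  have hWge : ∀ s ∈ Icc (0:ℝ) T, W0 ≤ WW b (f s) := fun s hs =>
    hmW ⟨le_rfl, hTpos.le⟩ hs hs.1
  have hNge : ∀ s ∈ Icc (0:ℝ) T, W0 / M ≤ NN (f s) := by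
    intro s hs
    have h2 := WW_le hb (f s)
    have h3 := hWge s hs
    rw [div_le_iff₀ hMpos]
    nlinarith
  have hm2 : MonotoneOn (fun s => WW b (f s) - s * (b * W0 / M)) (Icc 0 T) := by
    apply monotoneOn_of_hasDerivWithinAt_nonneg hcI
      (hWcont.sub ((continuous_id.mul continuous_const).continuousOn))
      (f' := fun s => WD n b (f s) - b * W0 / M)
    · intro s _
      exact ((hasDerivAt_comp_WW (hf s)).sub (hasDerivAt_mul_const _)).hasDerivWithinAt
    · intro s hs
      rw [interior_Icc] at hs
      have h1 := WD_ge hn hb hρ (hcon s hs.1.le).le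
      have h2 := hNge s (Ioo_subset_Icc_self hs)
      have h3 : b * (W0 / M) ≤ b * NN (f s) := mul_le_mul_of_nonneg_left h2 hb.le
      have h4 : b * W0 / M = b * (W0 / M) := by ring
      linarith
  have hfin : W0 - 0 * (b * W0 / M) ≤ WW b (f T) - T * (b * W0 / M) := by
    have := hm2 ⟨le_rfl, hTpos.le⟩ ⟨hTpos.le, le_rfl⟩ hTpos.le
    simpa using this
  have hTval : T * (b * W0 / M) = M * ρ := by
    rw [hT]; field_simp
  have hWT : WW b (f T) < M * ρ := by
    have h2 := WW_le hb (f T)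
    have h3 := hcon T hTpos.le
    nlinarith
  rw [hTval] at hfin
  simp at hfin
  linarith

end
end LienardAux


/-- For every positive integer `n` and every real `a < 0`, the origin is an unstable
equilibrium of the Liénard system `L_a`. -/
theorem lienard_origin_unstable (n : ℕ) (hn : 0 < n) (a : ℝ) (ha : a < 0) :
    ∃ ε > (0 : ℝ), ∀ δ > (0 : ℝ), ∃ x y : ℝ → ℝ, IsSolLienard n a x y ∧
      0 < x 0 ^ 2 + y 0 ^ 2 ∧ x 0 ^ 2 + y 0 ^ 2 < δ ^ 2 ∧
      ∃ t : ℝ, 0 ≤ t ∧ ε ^ 2 ≤ x t ^ 2 + y t ^ 2 := by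
  classical
  set b := -a with hbdef
  have hb : 0 < b := by rw [hbdef]; linarith
  have hb4 : (0:ℝ) < 4 + b := by linarith
  set ρ := 1 / (4 + b) with hρdef
  have hρmul : ρ * (4 + b) = 1 := by
    rw [hρdef]; field_simp
  have hρ0 : 0 < ρ := by positivity
  refine ⟨Real.sqrt ρ, Real.sqrt_pos.mpr hρ0, ?_⟩
  intro δ hδ
  set σ := min δ (Real.sqrt ρ) / 2 with hσdef
  have hminpos : 0 < min δ (Real.sqrt ρ) := lt_min hδ (Real.sqrt_pos.mpr hρ0)
  have hσ0 : 0 < σ := by rw [hσdef]; linarith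
  have hσδ : σ < δ := by
    have h1 : min δ (Real.sqrt ρ) ≤ δ := min_le_left _ _
    rw [hσdef]; linarith
  have hσρ : 2 * σ ^ 2 < ρ := by
    have h1 : σ ≤ Real.sqrt ρ / 2 := by
      have := min_le_right δ (Real.sqrt ρ); rw [hσdef]; linarith
    have h2 : σ ^ 2 ≤ (Real.sqrt ρ / 2) ^ 2 := pow_le_pow_left₀ hσ0.le h1 2
    have h3 : (Real.sqrt ρ / 2) ^ 2 = ρ / 4 := by
      rw [div_pow, Real.sq_sqrt hρ0.le]; norm_num
    nlinarith
  set z₀ : ℝ × ℝ := (σ, 0) with hz₀def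
  have hWz : LienardAux.WW b z₀ < ρ := by
    show 2 * σ ^ 2 + 2 * b * σ * 0 + (b ^ 2 + 2) * 0 ^ 2 < ρ
    nlinarith
  obtain ⟨f, hf0, hfd⟩ := LienardAux.global_sol hn hb hρmul z₀ hWz
  refine ⟨fun t => (f t).1, fun t => (f t).2, ?_, ?_, ?_, ?_⟩
  · intro t
    have hx := LienardAux.hasDerivAt_fst (hfd t)
    have hy := LienardAux.hasDerivAt_snd (hfd t)
    constructor
    · convert hx using 1
      show (f t).2 + a * ((f t).1 ^ (2 * n) - 1) * (f t).1 = (LienardAux.FF n b (f t)).1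
      unfold LienardAux.FF
      rw [hbdef]
      ring
    · exact hy
  · show 0 < (f 0).1 ^ 2 + (f 0).2 ^ 2
    rw [hf0]
    show 0 < σ ^ 2 + 0 ^ 2
    positivity
  · show (f 0).1 ^ 2 + (f 0).2 ^ 2 < δ ^ 2
    rw [hf0]
    show σ ^ 2 + 0 ^ 2 < δ ^ 2
    have := pow_lt_pow_left₀ hσδ hσ0.le (two_ne_zero)
    nlinarith
  · obtain ⟨t, ht0, htρ⟩ := LienardAux.escape hn hb hρmul hfd
      (by rw [hf0]; show 0 < σ ^ 2 + 0 ^ 2; positivity)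
    exact ⟨t, ht0, by rw [Real.sq_sqrt hρ0.le]; exact htρ⟩
end

section
/- Let n be a positive integer and a ≠ 0 a real number. For the planar vector field X(u, v) = (−au + v^{2n}(au − 1 − u²), −av + v^{2n+1}(a − u)) (the Poincaré compactification of the Liénard system L_a in the local chart U₁), the only point on the line v = 0 where X vanishes is (u, v) = (0, 0), and the Jacobian matrix of X at (0, 0) equals −a times the 2×2 identity matrix; in particular the origin of the chart U₁ is a hyperbolic node, attracting if a > 0 and repelling if a < 0. -/
open Filter

/-- The Poincaré compactification of the Liénard system `L_a` in the local chart `U₁`: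
`X (u, v) = (-a u + v^(2n) (a u - 1 - u²), -a v + v^(2n+1) (a - u))`. -/
noncomputable def chartU1Field (n : ℕ) (a : ℝ) : ℝ × ℝ → ℝ × ℝ :=
  fun p => (-a * p.1 + p.2 ^ (2 * n) * (a * p.1 - 1 - p.1 ^ 2),
            -a * p.2 + p.2 ^ (2 * n + 1) * (a - p.1))

lemma lyap (c ρ : ℝ) (hc : 0 < c) (g g' : ℝ → ℝ)
    (hg : ∀ t, HasDerivAt g (g' t) t) (hpos : ∀ t, 0 ≤ g t)
    (hineq : ∀ t, g t ≤ ρ → g' t ≤ -c * g t) (h0 : g 0 < ρ) :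
    (∀ t, 0 ≤ t → g t ≤ g 0) ∧ Tendsto g atTop (nhds 0) := by
  have hgc : Continuous g := by
    have : Differentiable ℝ g := fun t => (hg t).differentiableAt
    exact this.continuous
  -- Step 1 : g stays below ρ for all t ≥ 0
  have hstay : ∀ t, 0 ≤ t → g t < ρ := by
    by_contra hcon
    push_neg at hcon
    obtain ⟨T₀, hT₀, hρT₀⟩ := hcon
    set S : Set ℝ := {t | 0 ≤ t ∧ ρ ≤ g t} with hS
    have hSclosed : IsClosed S := by
      exact (isClosed_le continuous_const continuous_id).inter
        (isClosed_le continuous_const hgc)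
    have hSne : S.Nonempty := ⟨T₀, hT₀, hρT₀⟩
    have hSbdd : BddBelow S := ⟨0, fun x hx => hx.1⟩
    set T := sInf S with hT
    have hTS : T ∈ S := hSclosed.csInf_mem hSne hSbdd
    have hT0 : 0 ≤ T := hTS.1
    have hTρ : ρ ≤ g T := hTS.2
    have hTpos : 0 < T := by
      rcases lt_or_eq_of_le hT0 with h | h
      · exact h
      · exfalso; rw [← h] at hTρ; linarith
    have hlt : ∀ t, 0 ≤ t → t < T → g t < ρ := by
      intro t ht htT
      by_contra hge
      push_neg at hge
      have : T ≤ t := csInf_le hSbdd ⟨ht, hge⟩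
      linarith
    have hanti : AntitoneOn g (Set.Icc 0 T) := by
      apply antitoneOn_of_deriv_nonpos (convex_Icc 0 T) (hgc.continuousOn)
      · intro x hx; exact (hg x).differentiableAt.differentiableWithinAt
      · intro x hx
        rw [interior_Icc] at hx
        rw [(hg x).deriv]
        have hx1 := hlt x hx.1.le hx.2
        have := hineq x hx1.le
        nlinarith [hpos x]
    have := hanti (Set.left_mem_Icc.2 hT0) (Set.right_mem_Icc.2 hT0) hT0
    linarith
  -- Step 2: exponential decay via h t = g t * exp (c t)
  have hh : ∀ t, 0 ≤ t → g t * Real.exp (c * t) ≤ g 0 := by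
    intro t ht
    have hanti : AntitoneOn (fun t => g t * Real.exp (c * t)) (Set.Ici 0) := by
      apply antitoneOn_of_deriv_nonpos (convex_Ici 0)
      · exact (hgc.mul (Real.continuous_exp.comp (continuous_const.mul continuous_id))).continuousOn
      · intro x hx
        exact (((hg x).mul (((Real.hasDerivAt_exp (c*x)).comp x
          ((hasDerivAt_id x).const_mul c)))).differentiableAt).differentiableWithinAt
      · intro x hx
        rw [interior_Ici] at hx
        have hd : HasDerivAt (fun t => g t * Real.exp (c * t))
            (g' x * Real.exp (c * x) + g x * (Real.exp (c * x) * c)) x := by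
          exact (hg x).mul (((Real.hasDerivAt_exp (c*x)).comp x
            ((hasDerivAt_id x).const_mul c)).congr_deriv (by ring))
        rw [hd.deriv]
        have h1 := hineq x (hstay x hx.le).le
        have h2 : (0:ℝ) < Real.exp (c * x) := Real.exp_pos _
        nlinarith
    have := hanti (Set.mem_Ici.2 (le_refl 0)) (Set.mem_Ici.2 ht) ht
    simpa using this
  constructor
  · intro t ht
    have h1 := hh t ht
    have h2 : (1:ℝ) ≤ Real.exp (c * t) := Real.one_le_exp (by positivity)
    nlinarith [hpos t]
  · have hb : Tendsto (fun t => g 0 * Real.exp (-(c * t))) atTop (nhds 0) := by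
      have : Tendsto (fun t : ℝ => Real.exp (-(c * t))) atTop (nhds 0) :=
        Real.tendsto_exp_atBot.comp
          ((tendsto_neg_atTop_atBot).comp (tendsto_id.const_mul_atTop hc))
      simpa using this.const_mul (g 0)
    apply squeeze_zero' (Eventually.of_forall hpos) ?_ hb
    filter_upwards [eventually_ge_atTop (0:ℝ)] with t ht
    have h1 := hh t ht
    have h2 : (0:ℝ) < Real.exp (c * t) := Real.exp_pos _
    rw [Real.exp_neg, ← div_eq_mul_inv, le_div_iff₀ h2]
    exact hh t ht

lemma est (n : ℕ) (hn : 0 < n) (a u v : ℝ)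
    (hρ : u^2 + v^2 ≤ (|a|/(2*(|a|+2)))^2) :
    |v^(2*n) * (a*(u^2+v^2) - u*(1+(u^2+v^2)))| ≤ |a|/2 * (u^2+v^2) := by
  set d := |a|/(2*(|a|+2)) with hd
  have ha2 : (0:ℝ) < |a| + 2 := by positivity
  have hd0 : 0 ≤ d := by positivity
  have hd1 : d ≤ 1/2 := by
    rw [hd, div_le_div_iff₀ (by linarith) (by norm_num)]
    nlinarith [abs_nonneg a]
  set g := u^2 + v^2 with hg
  have hg0 : 0 ≤ g := by positivity
  have hgd : g ≤ d := by nlinarith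
  have hg1 : g ≤ 1 := by linarith
  have hu : |u| ≤ d := by nlinarith [abs_nonneg u, sq_abs u]
  have hv2n0 : 0 ≤ v^(2*n) := (even_two_mul n).pow_nonneg v
  have hv2n : v^(2*n) ≤ g := by
    have h1 : v^(2*n) = (v^2)^n := by rw [← pow_mul]
    have h2 : v^2 ≤ g := by nlinarith
    have h3 : (v^2)^n ≤ g^n := pow_le_pow_left₀ (by positivity) h2 n
    have h4 : g^n ≤ g^1 := pow_le_pow_of_le_one hg0 hg1 hn
    rw [h1]; rw [pow_one] at h4; linarith
  have hE : |a*g - u*(1+g)| ≤ |a|/2 := by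
    have h1 : |a*g - u*(1+g)| ≤ |a*g| + |u*(1+g)| := abs_sub _ _
    rw [abs_mul, abs_mul, abs_of_nonneg (by linarith : (0:ℝ) ≤ 1+g)] at h1
    have h2 : |a| * |g| ≤ |a| * d := by
      rw [abs_of_nonneg hg0]
      exact mul_le_mul_of_nonneg_left hgd (abs_nonneg a)
    have h3 : |u| * (1+g) ≤ d * 2 := by
      apply mul_le_mul hu (by linarith) (by linarith) hd0
    have h4 : |a| * d + d * 2 = |a|/2 := by
      rw [hd]; field_simp
    linarith
  calc |v^(2*n) * (a*g - u*(1+g))| = v^(2*n) * |a*g - u*(1+g)| := by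
        rw [abs_mul, abs_of_nonneg hv2n0]
    _ ≤ g * (|a|/2) := by
        apply mul_le_mul hv2n hE (abs_nonneg _) hg0
    _ = |a|/2 * g := by ring

lemma chartU1_zeroset (n : ℕ) (hn : 0 < n) (a : ℝ) (ha : a ≠ 0) :
    ∀ u : ℝ, chartU1Field n a (u, 0) = 0 ↔ u = 0 := by
  intro u
  have h2n : 2*n ≠ 0 := by omega
  have h2n1 : 2*n+1 ≠ 0 := by omega
  simp [chartU1Field, Prod.ext_iff, zero_pow h2n, zero_pow h2n1, ha]


lemma chartU1_jac (n : ℕ) (hn : 0 < n) (a : ℝ) (ha : a ≠ 0) :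
    fderiv ℝ (chartU1Field n a) (0, 0) = -a • ContinuousLinearMap.id ℝ (ℝ × ℝ) := by
  have h2n : 2*n ≠ 0 := by omega
  have h2n1 : 2*n+1 ≠ 0 := by omega
  have hJ : HasFDerivAt (chartU1Field n a) (-a • ContinuousLinearMap.id ℝ (ℝ × ℝ)) (0, 0) := by
    rw [hasFDerivAt_iff_isLittleO_nhds_zero, Asymptotics.isLittleO_iff]
    intro C hC
    rw [Metric.eventually_nhds_iff]
    have haC : (0:ℝ) < |a| + 2 := by positivity
    refine ⟨min 1 (C/(|a|+2)), by positivity, fun h hd => ?_⟩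
    rw [dist_zero_right] at hd
    have h1 : ‖h‖ < 1 := lt_of_lt_of_le hd (min_le_left _ _)
    have h2 : ‖h‖ < C/(|a|+2) := lt_of_lt_of_le hd (min_le_right _ _)
    have hn0 : (0:ℝ) ≤ ‖h‖ := norm_nonneg h
    have hexp : chartU1Field n a ((0,0) + h) - chartU1Field n a (0,0)
        - (-a • ContinuousLinearMap.id ℝ (ℝ × ℝ)) h
        = (h.2^(2*n)*(a*h.1-1-h.1^2), h.2^(2*n+1)*(a-h.1)) := by
      have e0 : ((0:ℝ),(0:ℝ)) + h = h := by simp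
      rw [e0]
      simp only [chartU1Field, ContinuousLinearMap.smul_apply, ContinuousLinearMap.id_apply,
        Prod.smul_fst, Prod.smul_snd, smul_eq_mul]
      rw [Prod.ext_iff]
      constructor <;> simp [zero_pow h2n, zero_pow h2n1, Prod.fst_sub, Prod.snd_sub] <;> ring
    rw [hexp, Prod.norm_def]
    have hf1 : |h.1| ≤ ‖h‖ := norm_fst_le h
    have hf2 : |h.2| ≤ ‖h‖ := norm_snd_le h
    have hpow : ∀ m : ℕ, 2 ≤ m → |h.2|^m ≤ ‖h‖^2 := by
      intro m hm
      calc |h.2|^m ≤ ‖h‖^m := pow_le_pow_left₀ (abs_nonneg _) hf2 m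
        _ ≤ ‖h‖^2 := pow_le_pow_of_le_one hn0 h1.le hm
    have key : ∀ (m : ℕ) (b : ℝ), 2 ≤ m → |b| ≤ |a| + 2 →
        ‖h.2^m * b‖ ≤ C * ‖h‖ := by
      intro m b hm hb
      rw [Real.norm_eq_abs, abs_mul, abs_pow]
      have hh2 : |h.2|^m * |b| ≤ ‖h‖^2 * (|a|+2) :=
        mul_le_mul (hpow m hm) hb (abs_nonneg b) (by positivity)
      have : ‖h‖^2 * (|a|+2) ≤ C * ‖h‖ := by
        rw [lt_div_iff₀ haC] at h2
        nlinarith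
      linarith
    apply sup_le
    · show ‖h.2^(2*n)*(a*h.1-1-h.1^2)‖ ≤ C * ‖h‖
      apply key (2*n) _ (by omega)
      have hsq : |h.1^2| ≤ 1 := by
        rw [abs_pow]
        nlinarith [abs_nonneg h.1]
      have t1 : |a*h.1 - 1 - h.1^2| ≤ |a*h.1 - 1| + |h.1^2| := abs_sub _ _
      have t2 : |a*h.1 - 1| ≤ |a*h.1| + |(1:ℝ)| := abs_sub _ _
      have t3 : |a*h.1| ≤ |a| := by
        rw [abs_mul]
        nlinarith [abs_nonneg a, abs_nonneg h.1]
      rw [abs_one] at t2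
      linarith
    · show ‖h.2^(2*n+1)*(a-h.1)‖ ≤ C * ‖h‖
      apply key (2*n+1) _ (by omega)
      have := abs_sub a h.1
      linarith
  exact hJ.fderiv

lemma forward_key (n : ℕ) (hn : 0 < n) (a σ : ℝ) (hσ : σ = 1 ∨ σ = -1) (hc : 0 < σ * a)
    (ε : ℝ) (hε : 0 < ε) :
    ∃ δ > (0:ℝ), ∀ γ : ℝ → ℝ × ℝ, (∀ t, HasDerivAt γ (σ • chartU1Field n a (γ t)) t) →
      ‖γ 0‖ < δ → (∀ t, 0 ≤ t → ‖γ t‖ < ε) ∧ Tendsto γ atTop (nhds ((0:ℝ), (0:ℝ))) := by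
  have ha : a ≠ 0 := by rintro rfl; simp at hc
  have hca : σ * a = |a| := by
    rcases hσ with rfl | rfl
    · rw [one_mul] at hc ⊢; exact (abs_of_pos hc).symm
    · have h2 : 0 < -a := by linarith [hc]
      rw [abs_of_neg (by linarith)]; ring
  have hσy : ∀ y : ℝ, σ * y ≤ |y| := by
    rcases hσ with rfl | rfl
    · intro y; rw [one_mul]; exact le_abs_self y
    · intro y; rw [neg_one_mul]; exact neg_le_abs y
  set ρ := (|a|/(2*(|a|+2)))^2 with hρdef
  have hρ0 : 0 < ρ := by
    have : 0 < |a| := abs_pos.2 ha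
    positivity
  refine ⟨Real.sqrt (min ρ (ε^2) / 2), by positivity, fun γ hγ hγ0 => ?_⟩
  set u : ℝ → ℝ := fun t => (γ t).1 with hudef
  set v : ℝ → ℝ := fun t => (γ t).2 with hvdef
  have hu : ∀ t, HasDerivAt u (σ * (chartU1Field n a (γ t)).1) t := fun t => (hγ t).fst
  have hv : ∀ t, HasDerivAt v (σ * (chartU1Field n a (γ t)).2) t := fun t => (hγ t).snd
  set g : ℝ → ℝ := fun t => u t ^ 2 + v t ^ 2 with hgdef
  set g' : ℝ → ℝ := fun t =>
    2 * u t * (σ * (chartU1Field n a (γ t)).1) + 2 * v t * (σ * (chartU1Field n a (γ t)).2)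
    with hg'def
  have hg : ∀ t, HasDerivAt g (g' t) t := by
    intro t
    have h1 : HasDerivAt (fun t => u t ^ 2) (2 * u t * (σ * (chartU1Field n a (γ t)).1)) t := by
      simpa [mul_comm] using ((hu t).fun_pow 2)
    have h2 : HasDerivAt (fun t => v t ^ 2) (2 * v t * (σ * (chartU1Field n a (γ t)).2)) t := by
      simpa [mul_comm] using ((hv t).fun_pow 2)
    exact h1.add h2
  have hpos : ∀ t, 0 ≤ g t := fun t => by positivity
  have hineq : ∀ t, g t ≤ ρ → g' t ≤ -(σ * a) * g t := by
    intro t hgt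
    have hest := est n hn a (u t) (v t) hgt
    have hid : g' t = -2*(σ*a)*(g t) + 2*(σ*((v t)^(2*n) * (a*(g t) - u t*(1+(g t))))) := by
      simp only [hg'def, hgdef, chartU1Field]
      ring
    have hσabs : σ*((v t)^(2*n) * (a*(g t) - u t*(1+(g t)))) ≤
        |(v t)^(2*n) * (a*(g t) - u t*(1+(g t)))| := hσy _
    rw [hid]
    simp only [hgdef] at *
    rw [hca]
    linarith
  have hg0 : g 0 < ρ ⊓ ε^2 := by
    have h1 : |u 0| ≤ ‖γ 0‖ := norm_fst_le (γ 0)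
    have h2 : |v 0| ≤ ‖γ 0‖ := norm_snd_le (γ 0)
    have h3 : ‖γ 0‖^2 < min ρ (ε^2) / 2 := by
      have hs : Real.sqrt (min ρ (ε^2) / 2) ^ 2 = min ρ (ε^2) / 2 :=
        Real.sq_sqrt (by positivity)
      nlinarith [norm_nonneg (γ 0), Real.sqrt_nonneg (min ρ (ε^2) / 2)]
    have h4 : u 0 ^ 2 ≤ ‖γ 0‖^2 := by
      rw [← sq_abs]; exact pow_le_pow_left₀ (abs_nonneg _) h1 2
    have h5 : v 0 ^ 2 ≤ ‖γ 0‖^2 := by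
      rw [← sq_abs]; exact pow_le_pow_left₀ (abs_nonneg _) h2 2
    have : g 0 ≤ 2 * ‖γ 0‖^2 := by simp only [hgdef]; linarith
    linarith
  obtain ⟨hbd, htend⟩ := lyap (σ * a) ρ hc g g' hg hpos hineq
    (lt_of_lt_of_le hg0 inf_le_left)
  have hnorm_sq : ∀ t, ‖γ t‖^2 ≤ g t := by
    intro t
    rw [Prod.norm_def]
    rcases le_total ‖(γ t).1‖ ‖(γ t).2‖ with h | h
    · rw [sup_eq_right.2 h]; simp only [hgdef, Real.norm_eq_abs]
      nlinarith [sq_abs (v t), sq_nonneg (u t)]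
    · rw [sup_eq_left.2 h]; simp only [hgdef, Real.norm_eq_abs]
      nlinarith [sq_abs (u t), sq_nonneg (v t)]
  constructor
  · intro t ht
    have h1 := hbd t ht
    have h2 := hnorm_sq t
    have h3 : g 0 < ε^2 := lt_of_lt_of_le hg0 inf_le_right
    nlinarith [norm_nonneg (γ t)]
  · have h0 : ((0:ℝ), (0:ℝ)) = (0 : ℝ × ℝ) := rfl
    rw [h0, tendsto_zero_iff_norm_tendsto_zero]
    apply squeeze_zero (fun t => norm_nonneg (γ t)) (g := fun t => Real.sqrt (g t))
    · intro t
      rw [show ‖γ t‖ = Real.sqrt (‖γ t‖^2) from (Real.sqrt_sq (norm_nonneg _)).symm]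
      exact Real.sqrt_le_sqrt (hnorm_sq t)
    · have : Tendsto (fun t => Real.sqrt (g t)) atTop (nhds (Real.sqrt 0)) :=
        (Real.continuous_sqrt.tendsto 0).comp htend
      simpa using this

/-- For `n ≥ 1` and `a ≠ 0`: the only zero of the chart-`U₁` field on the line `v = 0`
is the origin; the Jacobian at the origin is `-a` times the identity (so the origin is
a hyperbolic node); it is attracting if `a > 0` and repelling if `a < 0`. -/
theorem chartU1_origin_node (n : ℕ) (hn : 0 < n) (a : ℝ) (ha : a ≠ 0) :
    (∀ u : ℝ, chartU1Field n a (u, 0) = 0 ↔ u = 0) ∧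
    fderiv ℝ (chartU1Field n a) (0, 0) = -a • ContinuousLinearMap.id ℝ (ℝ × ℝ) ∧
    (0 < a → ∀ ε > (0 : ℝ), ∃ δ > (0 : ℝ), ∀ γ : ℝ → ℝ × ℝ,
      (∀ t : ℝ, HasDerivAt γ (chartU1Field n a (γ t)) t) → ‖γ 0‖ < δ →
      (∀ t : ℝ, 0 ≤ t → ‖γ t‖ < ε) ∧ Tendsto γ atTop (nhds (0, 0))) ∧
    (a < 0 → ∀ ε > (0 : ℝ), ∃ δ > (0 : ℝ), ∀ γ : ℝ → ℝ × ℝ,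
      (∀ t : ℝ, HasDerivAt γ (chartU1Field n a (γ t)) t) → ‖γ 0‖ < δ →
      (∀ t : ℝ, t ≤ 0 → ‖γ t‖ < ε) ∧ Tendsto γ atBot (nhds (0, 0))) := by
  refine ⟨chartU1_zeroset n hn a ha, chartU1_jac n hn a ha, ?_, ?_⟩
  · intro hapos ε hε
    obtain ⟨δ, hδ, hkey⟩ := forward_key n hn a 1 (Or.inl rfl) (by linarith) ε hε
    refine ⟨δ, hδ, fun γ hγ hγ0 => ?_⟩
    exact hkey γ (fun t => by simpa using hγ t) hγ0
  · intro haneg ε hε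
    obtain ⟨δ, hδ, hkey⟩ := forward_key n hn a (-1) (Or.inr rfl) (by nlinarith) ε hε
    refine ⟨δ, hδ, fun γ hγ hγ0 => ?_⟩
    set γ' : ℝ → ℝ × ℝ := fun t => γ (-t) with hγ'def
    have hder : ∀ t, HasDerivAt γ' ((-1 : ℝ) • chartU1Field n a (γ' t)) t := by
      intro t
      have h1 : HasDerivAt (fun x : ℝ => -x) (-1 : ℝ) t := hasDerivAt_neg t
      have h2 := (hγ (-t)).scomp t h1
      simpa [hγ'def, Function.comp_def] using h2
    have hγ'0 : ‖γ' 0‖ < δ := by simpa [hγ'def] using hγ0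
    obtain ⟨hbd, htend⟩ := hkey γ' hder hγ'0
    constructor
    · intro t ht
      have := hbd (-t) (by linarith)
      simpa [hγ'def] using this
    · have hcomp : Tendsto (fun t => γ' (-t)) atBot (nhds ((0:ℝ), (0:ℝ))) :=
        htend.comp tendsto_neg_atBot_atTop
      apply hcomp.congr
      intro t
      simp [hγ'def]
end
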